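/- For any simplicial tree T (viewed as a metric space with the path metric) and any p > 1, the L^p-compression exponent of T equals 1: α*_p(T) = 1. In particular, for every ε > 0 there is a large-scale Lipschitz map f : T → L^p with d(f(x),f(y)) ≥ C·d(x,y)^{1−ε} − D for some constants C > 0, D ≥ 0. -/

import Mathlib

/-- A map between (pseudo)metric spaces is large-scale Lipschitz if
`dist (f x) (f y) ≤ A * dist x y + B` for some constants `A, B ≥ 0`. -/
def LargeScaleLipschitz {X Y : Type*} [PseudoMetricSpace X] [PseudoMetricSpace Y]
    (f : X → Y) : Prop :=
  ∃ A B : ℝ, 0 ≤ A ∧ 0 ≤ B ∧ ∀ x y : X, dist (f x) (f y) ≤ A * dist x y + B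

/-- The compression exponent `α*_Z(X)`: the supremum of the `α ∈ [0,1]` for which some
large-scale Lipschitz map `f : X → Z` satisfies `dist (f x) (f y) ≥ C * dist x y ^ α - D`
with `C > 0`, `D ≥ 0`. -/
noncomputable def compressionExponent (X Z : Type*) [PseudoMetricSpace X]
    [PseudoMetricSpace Z] : ℝ :=
  sSup {α : ℝ | α ∈ Set.Icc (0 : ℝ) 1 ∧ ∃ f : X → Z, LargeScaleLipschitz f ∧
    ∃ C D : ℝ, 0 < C ∧ 0 ≤ D ∧ ∀ x y : X, C * dist x y ^ α - D ≤ dist (f x) (f y)}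

/-- The sum metric on a product of two pseudometric spaces:
`d((x,x'),(y,y')) = d(x,y) + d(x',y')`. -/
noncomputable def sumPseudoMetric (X X' : Type*) [PseudoMetricSpace X]
    [PseudoMetricSpace X'] : PseudoMetricSpace (X × X') :=
  { dist := fun p q => dist p.1 q.1 + dist p.2 q.2
    dist_self := fun p => by simp
    dist_comm := fun p q => by simp [dist_comm]
    dist_triangle := fun p q r => by
      have h1 := dist_triangle p.1 q.1 r.1
      have h2 := dist_triangle p.2 q.2 r.2
      linarith }

open MeasureTheory

set_option linter.unusedSectionVars false
set_option maxHeartbeats 1000000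

noncomputable section
namespace TreeComp
open MeasureTheory SimpleGraph

def Iun (n : ℕ) : Set ℝ := Set.Ico (n : ℝ) (n + 1)

lemma Iun_meas (n : ℕ) : MeasurableSet (Iun n) := measurableSet_Ico

lemma Iun_vol (n : ℕ) : volume (Iun n) = 1 := by
  simp [Iun]

lemma Iun_disj {m n : ℕ} (h : m ≠ n) : Disjoint (Iun m) (Iun n) := by
  rw [Iun, Iun, Set.Ico_disjoint_Ico]
  rcases lt_or_gt_of_ne h with h' | h'
  · have : (m:ℝ) + 1 ≤ n := by exact_mod_cast h'
    exact le_trans (min_le_left _ _) (le_max_right _ _ |>.trans' this)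
  · have : (n:ℝ) + 1 ≤ m := by exact_mod_cast h'
    exact le_trans (min_le_right _ _) (le_max_left _ _ |>.trans' this)

variable {ι : Type*}

lemma pointwise_pow {s : Finset ι} {e : ι → ℕ} (he : Set.InjOn e s) (g : ι → ℝ)
    {q : ℝ} (hq : 0 < q) (t : ℝ) :
    (‖∑ i ∈ s, (Iun (e i)).indicator (fun _ => g i) t‖₊ : ENNReal) ^ q
      = ∑ i ∈ s, (Iun (e i)).indicator (fun _ => (‖g i‖₊ : ENNReal) ^ q) t := by
  by_cases hex : ∃ i ∈ s, t ∈ Iun (e i)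
  · obtain ⟨i₀, hi₀, ht₀⟩ := hex
    have hsum : ∑ i ∈ s, (Iun (e i)).indicator (fun _ => g i) t = g i₀ := by
      rw [Finset.sum_eq_single i₀]
      · simp [Set.indicator_of_mem ht₀]
      · intro j hj hne
        have : t ∉ Iun (e j) := by
          intro htj
          exact (Iun_disj (fun hee => hne (he hj hi₀ hee)) ).ne_of_mem htj ht₀ rfl
        simp [Set.indicator_of_notMem this]
      · intro h; exact absurd hi₀ h
    rw [hsum, Finset.sum_eq_single i₀]
    · simp [Set.indicator_of_mem ht₀]
    · intro j hj hne
      have : t ∉ Iun (e j) := by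
        intro htj
        exact (Iun_disj (fun hee => hne (he hj hi₀ hee))).ne_of_mem htj ht₀ rfl
      simp [Set.indicator_of_notMem this]
    · intro h; exact absurd hi₀ h
  · push_neg at hex
    have hsum : ∑ i ∈ s, (Iun (e i)).indicator (fun _ => g i) t = 0 := by
      apply Finset.sum_eq_zero
      intro j hj
      simp [Set.indicator_of_notMem (hex j hj)]
    rw [hsum]
    rw [Finset.sum_eq_zero]
    · simp [ENNReal.zero_rpow_of_pos hq]
    · intro j hj
      simp [Set.indicator_of_notMem (hex j hj)]

open scoped ENNReal

variable {p : ENNReal}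

/-- finite sum of indicator functions -/
def FF (s : Finset ι) (e : ι → ℕ) (g : ι → ℝ) : ℝ → ℝ :=
  fun t => ∑ i ∈ s, (Iun (e i)).indicator (fun _ => g i) t

lemma memℒp_FF (s : Finset ι) (e : ι → ℕ) (g : ι → ℝ) : MemLp (FF s e g) p volume := by
  apply memLp_finset_sum
  intro i _
  exact memLp_indicator_const p (Iun_meas (e i)) (g i) (Or.inr (by simp [Iun_vol]))

lemma FF_extend {s s' : Finset ι} (hss : s ⊆ s') (e : ι → ℕ) {g : ι → ℝ}
    (hg : ∀ i ∈ s', i ∉ s → g i = 0) : FF s' e g = FF s e g := by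
  funext t
  exact (Finset.sum_subset hss (fun i hi hni => by simp [hg i hi hni])).symm

lemma FF_sub (s : Finset ι) (e : ι → ℕ) (g₁ g₂ : ι → ℝ) :
    FF s e g₁ - FF s e g₂ = FF s e (g₁ - g₂) := by
  funext t
  simp only [FF, Pi.sub_apply, ← Finset.sum_sub_distrib]
  congr 1
  funext i
  by_cases htt : t ∈ Iun (e i) <;> simp [htt]

lemma eLpNorm_FF (hp0 : p ≠ 0) (hptop : p ≠ ⊤) {s : Finset ι} {e : ι → ℕ}
    (he : Set.InjOn e s) (g : ι → ℝ) :
    eLpNorm (FF s e g) p volume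
      = (∑ i ∈ s, (‖g i‖₊ : ℝ≥0∞) ^ p.toReal) ^ (1 / p.toReal) := by
  have hq : 0 < p.toReal := ENNReal.toReal_pos hp0 hptop
  rw [eLpNorm_eq_lintegral_rpow_enorm_toReal hp0 hptop]
  simp only [enorm_eq_nnnorm]
  congr 1
  have : ∀ t : ℝ, (‖FF s e g t‖₊ : ℝ≥0∞) ^ p.toReal
      = ∑ i ∈ s, (Iun (e i)).indicator (fun _ => (‖g i‖₊ : ℝ≥0∞) ^ p.toReal) t :=
    pointwise_pow he g hq
  simp_rw [this]
  rw [lintegral_finset_sum]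
  · congr 1
    funext i
    rw [lintegral_indicator (Iun_meas (e i)), setLIntegral_const, Iun_vol, mul_one]
  · intro i _
    exact (measurable_const.indicator (Iun_meas (e i)))

lemma norm_toLp_FF (hp0 : p ≠ 0) (hptop : p ≠ ⊤) {s : Finset ι} {e : ι → ℕ}
    (he : Set.InjOn e s) (g : ι → ℝ) :
    ‖(memℒp_FF (p := p) s e g).toLp (FF s e g)‖
      = (∑ i ∈ s, |g i| ^ p.toReal) ^ (1 / p.toReal) := by
  rw [MeasureTheory.Lp.norm_toLp _ (memℒp_FF s e g), eLpNorm_FF hp0 hptop he g, ← ENNReal.toReal_rpow]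
  congr 1
  rw [ENNReal.toReal_sum (fun i _ => by
    exact ENNReal.rpow_ne_top_of_nonneg (ENNReal.toReal_nonneg) ENNReal.coe_ne_top)]
  congr 1
  funext i
  rw [← ENNReal.toReal_rpow]
  simp [Real.norm_eq_abs]



variable {V : Type*} [DecidableEq V] {G : SimpleGraph V}

/-- splitting a geodesic at a support vertex -/
lemma dist_split (hc : G.Connected) {u v : V} (w : G.Walk u v) (hw : w.length = G.dist u v)
    {x : V} (hx : x ∈ w.support) :
    G.dist u x + G.dist x v = G.dist u v ∧ (w.takeUntil x hx).length = G.dist u x ∧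
      (w.dropUntil x hx).length = G.dist x v := by
  have h1 : G.dist u x ≤ (w.takeUntil x hx).length := SimpleGraph.dist_le _
  have h2 : G.dist x v ≤ (w.dropUntil x hx).length := SimpleGraph.dist_le _
  have hlen : (w.takeUntil x hx).length + (w.dropUntil x hx).length = w.length := by
    conv_rhs => rw [← Walk.take_spec w hx]
    exact (Walk.length_append _ _).symm
  have htri : G.dist u v ≤ G.dist u x + G.dist x v := hc.dist_triangle
  omega

lemma dist_add_eq_of_mem (hc : G.Connected) {u v : V} (w : G.Walk u v)
    (hw : w.length = G.dist u v) {x : V} (hx : x ∈ w.support) :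
    G.dist u x + G.dist x v = G.dist u v :=
  (dist_split hc w hw hx).1

/-- the tail of a geodesic cons walk is a geodesic -/
lemma tail_geodesic (hc : G.Connected) {u u' v : V} (h : G.Adj u u') (w' : G.Walk u' v)
    (hw : (Walk.cons h w').length = G.dist u v) : w'.length = G.dist u' v := by
  have h1 : G.dist u' v ≤ w'.length := SimpleGraph.dist_le _
  have h2 : G.dist u v ≤ 1 + G.dist u' v := by
    have := hc.dist_triangle (u := u) (v := u') (w := v)
    have huu' : G.dist u u' ≤ 1 := by
      simpa using SimpleGraph.dist_le (Walk.cons h Walk.nil)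
    omega
  simp only [Walk.length_cons] at hw
  omega

lemma dist_shift (hc : G.Connected) {u u' v : V} (h : G.Adj u u') (w' : G.Walk u' v)
    (hw : (Walk.cons h w').length = G.dist u v) {x : V} (hx : x ∈ w'.support) :
    G.dist u x = G.dist u' x + 1 := by
  have hg' : w'.length = G.dist u' v := tail_geodesic hc h w' hw
  have hxm : x ∈ (Walk.cons h w').support := by
    rw [Walk.support_cons]; exact List.mem_cons_of_mem _ hx
  have e1 := dist_add_eq_of_mem hc (Walk.cons h w') hw hxm
  have e2 := dist_add_eq_of_mem hc w' hg' hx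
  simp only [Walk.length_cons] at hw
  omega

/-- geodesics are paths, and distance from the start is injective on support -/
lemma geodesic_isPath_injOn (hc : G.Connected) {u v : V} (w : G.Walk u v)
    (hw : w.length = G.dist u v) :
    w.IsPath ∧ Set.InjOn (fun x => G.dist u x) {x | x ∈ w.support} := by
  induction w with
  | nil => constructor
           · exact Walk.IsPath.nil
           · intro x hx y hy _; simp at hx hy; subst hx; subst hy; rfl
  | @cons u u' v h w' ih =>
    have hg' : w'.length = G.dist u' v := tail_geodesic hc h w' hw
    obtain ⟨hp', hinj'⟩ := ih hg'
    have hnotmem : u ∉ w'.support := by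
      intro hu
      have := dist_shift hc h w' hw hu
      rw [(SimpleGraph.dist_self : G.dist u u = 0)] at this
      omega
    refine ⟨hp'.cons hnotmem, ?_⟩
    intro x hx y hy hxy
    simp only [Set.mem_setOf_eq, Walk.support_cons, List.mem_cons] at hx hy
    simp only at hxy
    rcases hx with rfl | hx <;> rcases hy with rfl | hy
    · rfl
    · exfalso
      rw [SimpleGraph.dist_self, dist_shift hc h w' hw hy] at hxy
      omega
    · exfalso
      rw [SimpleGraph.dist_self, dist_shift hc h w' hw hx] at hxy
      omega
    · have h1 := dist_shift hc h w' hw hx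
      have h2 := dist_shift hc h w' hw hy
      have hxy' : G.dist u x = G.dist u y := hxy
      exact hinj' hx hy (show G.dist u' x = G.dist u' y by omega)

/-- existence of a vertex at each distance along a geodesic -/
lemma exists_mem_dist (hc : G.Connected) {u v : V} (w : G.Walk u v)
    (hw : w.length = G.dist u v) {j : ℕ} (hj : j ≤ w.length) :
    ∃ x ∈ w.support, G.dist u x = j := by
  induction w generalizing j with
  | nil =>
    simp only [Walk.length_nil, Nat.le_zero] at hj
    subst hj
    exact ⟨_, Walk.start_mem_support _, SimpleGraph.dist_self⟩
  | @cons u u' v h w' ih =>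
    have hg' : w'.length = G.dist u' v := tail_geodesic hc h w' hw
    rcases Nat.eq_zero_or_pos j with rfl | hj0
    · exact ⟨u, by simp, by simpa using (SimpleGraph.dist_self : G.dist u u = 0)⟩
    · obtain ⟨x, hx, hdx⟩ := ih hg' (j := j - 1) (by simp only [Walk.length_cons] at hj; omega)
      refine ⟨x, by simp [hx], ?_⟩
      rw [dist_shift hc h w' hw hx, hdx]
      omega



lemma countable_of_connected [G.LocallyFinite] (hc : G.Connected) : Countable V := by
  have hne : Nonempty V := hc.nonempty
  obtain ⟨r⟩ := hne
  have hball : ∀ n : ℕ, {v : V | G.dist r v ≤ n}.Finite := by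
    intro n
    induction n with
    | zero =>
      apply Set.Finite.subset (Set.finite_singleton r)
      intro v hv
      simp only [Set.mem_setOf_eq, Nat.le_zero] at hv
      simp [Set.mem_singleton_iff, (hc.dist_eq_zero_iff.mp hv).symm]
    | succ n ihn =>
      have hsub : {v : V | G.dist r v ≤ n + 1} ⊆
          {v : V | G.dist r v ≤ n} ∪ ⋃ u ∈ {v : V | G.dist r v ≤ n}, G.neighborSet u := by
        intro v hv
        simp only [Set.mem_setOf_eq] at hv
        rcases Nat.lt_or_ge (G.dist r v) (n+1) with h | h
        · exact Or.inl (by simpa using Nat.lt_succ_iff.mp h)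
        · have hd : G.dist r v = n + 1 := le_antisymm hv h
          obtain ⟨w, hw⟩ := hc.exists_walk_length_eq_dist r v
          right
          rcases w with _ | ⟨hadj, w'⟩
          · simp at hd
          · obtain ⟨x, q, h', hcq⟩ := Walk.exists_cons_eq_concat hadj w'
            have hlq : q.length = n := by
              have := congrArg Walk.length hcq
              rw [Walk.length_concat] at this
              rw [hw, hd] at this
              omega
            have hdx : G.dist r x ≤ n := hlq ▸ SimpleGraph.dist_le q
            refine Set.mem_biUnion (show x ∈ {v : V | G.dist r v ≤ n} from hdx) ?_
            exact h'
      exact Set.Finite.subset (ihn.union (ihn.biUnion (fun u _ => (G.neighborSet u).toFinite))) hsub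
  have huniv : (Set.univ : Set V).Countable := by
    have : (Set.univ : Set V) ⊆ ⋃ n : ℕ, {v : V | G.dist r v ≤ n} := by
      intro v _
      exact Set.mem_iUnion.mpr ⟨G.dist r v, Set.mem_setOf_eq ▸ le_rfl⟩
    exact Set.Countable.mono this (Set.countable_iUnion fun n => (hball n).countable)
  exact Set.countable_univ_iff.mp huniv




noncomputable def geo (hc : G.Connected) (u v : V) : G.Walk u v :=
  (hc.exists_walk_length_eq_dist u v).choose

lemma geo_length (hc : G.Connected) (u v : V) : (geo hc u v).length = G.dist u v :=
  (hc.exists_walk_length_eq_dist u v).choose_spec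

lemma geo_isPath (hc : G.Connected) (u v : V) : (geo hc u v).IsPath :=
  (geodesic_isPath_injOn hc _ (geo_length hc u v)).1

lemma geo_split (hc : G.Connected) (r v : V) {u : V} (hu : u ∈ (geo hc r v).support) :
    G.dist r u + G.dist u v = G.dist r v :=
  dist_add_eq_of_mem hc _ (geo_length hc r v) hu

lemma adj_ne_level (htree : G.IsTree) (r : V) {x y : V} (hxy : G.Adj x y) :
    G.dist r x ≠ G.dist r y := by
  have hc := htree.isConnected
  intro heq
  have hxny : x ∉ (geo hc r y).support := by
    intro hx
    have h1 := geo_split hc r y hx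
    have hdxy : G.dist x y = 1 := SimpleGraph.dist_eq_one_iff_adj.mpr hxy
    omega
  have hQpath : ((geo hc r y).concat hxy.symm).IsPath := by
    rw [Walk.isPath_def, Walk.support_concat, ← List.concat_eq_append]
    exact List.Nodup.concat hxny ((geo_isPath hc r y).support_nodup)
  have := (htree.existsUnique_path r x).unique hQpath (geo_isPath hc r x)
  have hlen := congrArg Walk.length this
  rw [Walk.length_concat, geo_length, geo_length] at hlen
  omega

lemma adj_level (htree : G.IsTree) (r : V) {x y : V} (hxy : G.Adj x y) :
    G.dist r x = G.dist r y + 1 ∨ G.dist r y = G.dist r x + 1 := by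
  have hc := htree.isConnected
  have hne := adj_ne_level htree r hxy
  have h1 : G.dist r x ≤ G.dist r y + 1 := by
    have := hc.dist_triangle (u := r) (v := y) (w := x)
    have : G.dist y x = 1 := SimpleGraph.dist_eq_one_iff_adj.mpr hxy.symm
    omega
  have h2 : G.dist r y ≤ G.dist r x + 1 := by
    have := hc.dist_triangle (u := r) (v := x) (w := y)
    have : G.dist x y = 1 := SimpleGraph.dist_eq_one_iff_adj.mpr hxy
    omega
  omega

lemma adj_geo (htree : G.IsTree) (r : V) {x y : V} (hxy : G.Adj x y)
    (hl : G.dist r x = G.dist r y + 1) :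
    geo htree.isConnected r x = (geo htree.isConnected r y).concat hxy.symm := by
  have hc := htree.isConnected
  have hxny : x ∉ (geo hc r y).support := by
    intro hx
    have h1 := geo_split hc r y hx
    omega
  have hQpath : ((geo hc r y).concat hxy.symm).IsPath := by
    rw [Walk.isPath_def, Walk.support_concat, ← List.concat_eq_append]
    exact List.Nodup.concat hxny ((geo_isPath hc r y).support_nodup)
  exact (htree.existsUnique_path r x).unique (geo_isPath hc r x) hQpath

lemma meet (hc : G.Connected) (r x y : V) :
    ∃ m, m ∈ (geo hc r x).support ∧ m ∈ (geo hc r y).support ∧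
      (∀ u, u ∈ (geo hc r x).support → u ∈ (geo hc r y).support →
        G.dist r u ≤ G.dist r m) ∧
      G.dist r m ≤ G.dist r x ∧ G.dist r m ≤ G.dist r y ∧
      G.dist x y + 2 * G.dist r m ≤ G.dist r x + G.dist r y := by
  classical
  set s : Finset V := (geo hc r x).support.toFinset ∩ (geo hc r y).support.toFinset with hs
  have hsne : s.Nonempty := ⟨r, by
    simp [hs, List.mem_toFinset, Walk.start_mem_support]⟩
  obtain ⟨m, hm, hmax⟩ := Finset.exists_max_image s (fun u => G.dist r u) hsne
  simp only [hs, Finset.mem_inter, List.mem_toFinset] at hm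
  obtain ⟨hmx, hmy⟩ := hm
  have hx1 := geo_split hc r x hmx
  have hy1 := geo_split hc r y hmy
  have htri : G.dist x y ≤ G.dist x m + G.dist m y := hc.dist_triangle
  have hcomm : G.dist x m = G.dist m x := SimpleGraph.dist_comm
  refine ⟨m, hmx, hmy, ?_, by omega, by omega, by omega⟩
  intro u hux huy
  exact hmax u (by simp [hs, List.mem_toFinset, hux, huy])


open Finset

variable {a pr : ℝ}

def psi (a : ℝ) (j : ℕ) : ℝ := ((j : ℝ) + 1) ^ (a - 1)

def phi (a : ℝ) (k : ℕ) : ℝ := ∑ j ∈ range (k + 1), psi a j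

lemma psi_pos (a : ℝ) (j : ℕ) : 0 < psi a j :=
  Real.rpow_pos_of_pos (by positivity) _

lemma psi_anti (ha : a ≤ 1) {j k : ℕ} (hjk : j ≤ k) : psi a k ≤ psi a j := by
  apply Real.rpow_le_rpow_of_nonpos (by positivity) ?_ (by linarith)
  have : (j : ℝ) ≤ (k : ℝ) := by exact_mod_cast hjk
  linarith

lemma phi_pos (a : ℝ) (k : ℕ) : 0 < phi a k :=
  Finset.sum_pos (fun j _ => psi_pos a j) (by simp)

lemma phi_zero (a : ℝ) : phi a 0 = 1 := by
  simp [phi, psi]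

lemma phi_succ (a : ℝ) (k : ℕ) : phi a (k + 1) = phi a k + psi a (k + 1) := by
  simp [phi, Finset.sum_range_succ]

lemma phi_lower (ha0 : 0 < a) (ha1 : a ≤ 1) (k : ℕ) : ((k : ℝ) + 1) ^ a ≤ phi a k := by
  have hterm : ∀ j ∈ range (k + 1), psi a k ≤ psi a j :=
    fun j hj => psi_anti ha1 (by simpa using Nat.lt_succ_iff.mp (mem_range.mp hj))
  have hsum := Finset.card_nsmul_le_sum (range (k + 1)) (psi a) (psi a k) hterm
  simp only [card_range, nsmul_eq_mul] at hsum
  have heq : ((k : ℝ) + 1) ^ a = ((k : ℝ) + 1) * ((k : ℝ) + 1) ^ (a - 1) := by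
    rw [← Real.rpow_one_add' (by positivity) (by intro h; linarith)]
    ring_nf
  rw [heq]
  calc ((k : ℝ) + 1) * ((k : ℝ) + 1) ^ (a - 1)
      = ((k : ℕ) + 1 : ℕ) * psi a k := by push_cast [psi]; ring
    _ ≤ phi a k := hsum

/-- lower bound for the sum of `phi^pr` -/
lemma sum_phi_lb (ha0 : 0 < a) (ha1 : a ≤ 1) (hpr : 0 < pr) (M : ℕ) (hM : 0 < M) :
    ((M : ℝ) / 2) ^ (a * pr + 1) ≤ ∑ k ∈ range M, phi a k ^ pr := by
  have hM2 : (0 : ℝ) < (M : ℝ) / 2 := by positivity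
  have hstep : ∀ k ∈ range M \ range (M / 2), ((M : ℝ) / 2) ^ (a * pr) ≤ phi a k ^ pr := by
    intro k hk
    simp only [mem_sdiff, mem_range, not_lt] at hk
    have hk2 : (M : ℝ) / 2 ≤ (k : ℝ) + 1 := by
      have h1 : M ≤ 2 * (M / 2) + 1 := by omega
      have h2 : ((M / 2 : ℕ) : ℝ) ≤ (k : ℝ) := by exact_mod_cast hk.2
      have h3 : (M : ℝ) ≤ 2 * ((M / 2 : ℕ) : ℝ) + 1 := by exact_mod_cast h1
      linarith
    calc ((M : ℝ) / 2) ^ (a * pr) ≤ ((k : ℝ) + 1) ^ (a * pr) :=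
          Real.rpow_le_rpow hM2.le hk2 (by positivity)
      _ = (((k : ℝ) + 1) ^ a) ^ pr := Real.rpow_mul (by positivity) a pr
      _ ≤ phi a k ^ pr := Real.rpow_le_rpow (by positivity) (phi_lower ha0 ha1 k) hpr.le
  have hsum := Finset.card_nsmul_le_sum (range M \ range (M / 2))
    (fun k => phi a k ^ pr) (((M : ℝ) / 2) ^ (a * pr)) hstep
  have hcard : (range M \ range (M / 2)).card = M - M / 2 := by
    rw [Finset.card_sdiff_of_subset (Finset.range_subset_range.mpr (by omega))]
    simp
  have hsub : ∑ k ∈ range M \ range (M / 2), phi a k ^ pr ≤ ∑ k ∈ range M, phi a k ^ pr := by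
    apply Finset.sum_le_sum_of_subset_of_nonneg (Finset.sdiff_subset)
    intro k _ _
    exact Real.rpow_nonneg (phi_pos a k).le pr
  have hcard2 : (M : ℝ) / 2 ≤ ((M - M / 2 : ℕ) : ℝ) := by
    have : 2 * (M - M / 2) ≥ M := by omega
    have := (Nat.cast_le (α := ℝ)).mpr this
    push_cast at this
    linarith
  have hfinal : ((M : ℝ) / 2) ^ (a * pr + 1)
      ≤ ((M - M / 2 : ℕ) : ℝ) * ((M : ℝ) / 2) ^ (a * pr) := by
    rw [Real.rpow_add hM2, Real.rpow_one]
    calc ((M : ℝ) / 2) ^ (a * pr) * ((M : ℝ) / 2)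
        ≤ ((M : ℝ) / 2) ^ (a * pr) * ((M - M / 2 : ℕ) : ℝ) := by
          apply mul_le_mul_of_nonneg_left hcard2 (by positivity)
      _ = ((M - M / 2 : ℕ) : ℝ) * ((M : ℝ) / 2) ^ (a * pr) := by ring
  rw [hcard, nsmul_eq_mul] at hsum
  linarith

/-- summability of the increments to the `pr` power -/
lemma psi_summable (ha1 : a < 1) (hpr : 0 < pr) (hq : 1 < (1 - a) * pr) :
    Summable (fun j : ℕ => psi a (j + 1) ^ pr) := by
  have h1 : Summable (fun n : ℕ => 1 / (n : ℝ) ^ ((1 - a) * pr)) :=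
    Real.summable_one_div_nat_rpow.mpr hq
  have h2 : Summable (fun n : ℕ => 1 / ((n + 2 : ℕ) : ℝ) ^ ((1 - a) * pr)) :=
    ((summable_nat_add_iff 2).mpr h1 : _)
  apply h2.congr
  intro j
  have hb : (0 : ℝ) < (j : ℝ) + 2 := by positivity
  rw [psi]
  push_cast
  rw [show (j : ℝ) + 1 + 1 = (j : ℝ) + 2 by ring, ← Real.rpow_mul hb.le,
    show (a - 1) * pr = -((1 - a) * pr) by ring, Real.rpow_neg hb.le, one_div]


section Key
variable {V : Type*} [DecidableEq V] {G : SimpleGraph V}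

lemma eLpNorm_FF_toReal {p : ENNReal} {ι : Type*} (hp0 : p ≠ 0) (hptop : p ≠ ⊤)
    {s : Finset ι} {e : ι → ℕ} (he : Set.InjOn e s) (g : ι → ℝ) :
    (eLpNorm (FF s e g) p volume).toReal
      = (∑ i ∈ s, |g i| ^ p.toReal) ^ (1 / p.toReal) := by
  rw [eLpNorm_FF hp0 hptop he g, ← ENNReal.toReal_rpow]
  congr 1
  rw [ENNReal.toReal_sum (fun i _ => by
    exact ENNReal.rpow_ne_top_of_nonneg (ENNReal.toReal_nonneg) ENNReal.coe_ne_top)]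
  congr 1
  funext i
  rw [← ENNReal.toReal_rpow]
  simp [Real.norm_eq_abs]

lemma key (htree : G.IsTree) [G.LocallyFinite]
    (p : ENNReal) [Fact (1 ≤ p)] (hp1 : 1 < p) (hptop : p ≠ ⊤)
    (a : ℝ) (ha0 : 0 < a) (ha1 : a < 1) (hq : 1 < (1 - a) * p.toReal) :
    ∃ f : V → Lp ℝ p (volume : Measure ℝ),
      (∃ A : ℝ, 0 ≤ A ∧ ∀ x y : V, dist (f x) (f y) ≤ A * (G.dist x y : ℝ)) ∧
      ∀ x y : V, ((G.dist x y : ℝ) / 4) ^ (a + 1 / p.toReal) ≤ dist (f x) (f y) := by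
  classical
  have hc := htree.isConnected
  obtain ⟨r⟩ : Nonempty V := hc.nonempty
  set pr := p.toReal with hpr_def
  have hp0 : p ≠ 0 := (lt_trans zero_lt_one hp1).ne'
  have hpr1 : 1 < pr := by
    have := (ENNReal.toReal_lt_toReal (by simp) hptop).mpr hp1
    simpa using this
  have hpr0 : 0 < pr := lt_trans one_pos hpr1
  have : Countable V := countable_of_connected hc
  obtain ⟨enc, henc⟩ := Countable.exists_injective_nat V
  -- the coefficient functions and the embedding
  set cf : V → V → ℝ :=
    fun v u => if u ∈ (geo hc r v).support then phi a (G.dist u v) else 0 with hcf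
  set sF : V → Finset V := fun v => (geo hc r v).support.toFinset with hsF
  set f : V → Lp ℝ p (volume : Measure ℝ) :=
    fun v => (memℒp_FF (p := p) (sF v) enc (cf v)).toLp (FF (sF v) enc (cf v)) with hf
  have hczero : ∀ v u, u ∉ sF v → cf v u = 0 := by
    intro v u hu
    rw [hcf]
    exact if_neg (by simpa [hsF, List.mem_toFinset] using hu)
  -- distance formula
  have hdistF : ∀ x y : V, dist (f x) (f y)
      = (∑ u ∈ sF x ∪ sF y, |cf x u - cf y u| ^ pr) ^ (1 / pr) := by
    intro x y
    have hxg : FF (sF x ∪ sF y) enc (cf x) = FF (sF x) enc (cf x) :=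
      FF_extend Finset.subset_union_left enc (fun u _ hu => hczero x u hu)
    have hyg : FF (sF x ∪ sF y) enc (cf y) = FF (sF y) enc (cf y) :=
      FF_extend Finset.subset_union_right enc (fun u _ hu => hczero y u hu)
    have hfx : f x = (memℒp_FF (p := p) (sF x ∪ sF y) enc (cf x)).toLp _ :=
      (MemLp.toLp_congr _ _ (Filter.Eventually.of_forall (fun t => by rw [hxg]))).symm
    have hfy : f y = (memℒp_FF (p := p) (sF x ∪ sF y) enc (cf y)).toLp _ :=
      (MemLp.toLp_congr _ _ (Filter.Eventually.of_forall (fun t => by rw [hyg]))).symm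
    rw [dist_eq_norm, hfx, hfy, ← MemLp.toLp_sub, MeasureTheory.Lp.norm_toLp, FF_sub,
      eLpNorm_FF_toReal hp0 hptop (henc.injOn) _]
    simp only [Pi.sub_apply, hpr_def]
  -- values of the coefficients
  have hcself : ∀ v, cf v v = 1 := by
    intro v
    rw [hcf]
    simp only [Walk.end_mem_support, if_true]
    rw [(SimpleGraph.dist_self : G.dist v v = 0), phi_zero]
  -- the series bound
  set S : ℝ := ∑' j : ℕ, psi a (j + 1) ^ pr with hS
  have hsummable : Summable (fun j : ℕ => psi a (j + 1) ^ pr) := psi_summable ha1 hpr0 hq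
  have hS0 : 0 ≤ S := tsum_nonneg (fun j => Real.rpow_nonneg (psi_pos a _).le pr)
  set A : ℝ := (1 + S) ^ (1 / pr) with hA
  have hA0 : 0 ≤ A := Real.rpow_nonneg (by linarith) _
  -- adjacent upper bound
  have hadj1 : ∀ x y : V, (hxy : G.Adj x y) → G.dist r x = G.dist r y + 1 →
      dist (f x) (f y) ≤ A := by
    intro x y hxy hl
    have hgeo : geo hc r x = (geo hc r y).concat hxy.symm := adj_geo htree r hxy hl
    have hsupp : (geo hc r x).support = (geo hc r y).support ++ [x] := by
      rw [hgeo, Walk.support_concat]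
    have hxns : x ∉ (geo hc r y).support := by
      intro hx
      have := geo_split hc r y hx
      omega
    have hxnsF : x ∉ sF y := by simpa [hsF, List.mem_toFinset] using hxns
    have hunion : sF x ∪ sF y = insert x (sF y) := by
      ext u
      simp only [Finset.mem_union, Finset.mem_insert, hsF, List.mem_toFinset, hsupp,
        List.mem_append, List.mem_singleton]
      tauto
    have hsum : ∑ u ∈ sF x ∪ sF y, |cf x u - cf y u| ^ pr ≤ 1 + S := by
      rw [hunion, Finset.sum_insert hxnsF]
      have hterm1 : |cf x x - cf y x| ^ pr = 1 := by
        rw [hcself x, hczero y x hxnsF]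
        simp [Real.one_rpow]
      rw [hterm1]
      have hrest : ∑ u ∈ sF y, |cf x u - cf y u| ^ pr
          = ∑ u ∈ sF y, psi a (G.dist u y + 1) ^ pr := by
        apply Finset.sum_congr rfl
        intro u hu
        have hu' : u ∈ (geo hc r y).support := by simpa [hsF, List.mem_toFinset] using hu
        have hux : u ∈ (geo hc r x).support := by
          rw [hsupp]; exact List.mem_append_left _ hu'
        have h1 := geo_split hc r x hux
        have h2 := geo_split hc r y hu'
        have hdux : G.dist u x = G.dist u y + 1 := by omega
        have hcx : cf x u = phi a (G.dist u y + 1) := by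
          rw [hcf]; simp only [hux, if_true, hdux]
        have hcy : cf y u = phi a (G.dist u y) := by
          rw [hcf]; simp only [hu', if_true]
        rw [hcx, hcy, phi_succ, add_sub_cancel_left, abs_of_pos (psi_pos a _)]
      rw [hrest]
      have hrest2 : ∑ u ∈ sF y, psi a (G.dist u y + 1) ^ pr ≤ S := by
        have hinj : ∀ u ∈ sF y, ∀ u' ∈ sF y,
            G.dist u y = G.dist u' y → u = u' := by
          intro u hu u' hu' heq
          have hu1 : u ∈ (geo hc r y).support := by simpa [hsF, List.mem_toFinset] using hu
          have hu2 : u' ∈ (geo hc r y).support := by simpa [hsF, List.mem_toFinset] using hu'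
          have h1 := geo_split hc r y hu1
          have h2 := geo_split hc r y hu2
          exact (geodesic_isPath_injOn hc _ (geo_length hc r y)).2 hu1 hu2
            (show G.dist r u = G.dist r u' by omega)
        have himage : ∑ u ∈ sF y, psi a (G.dist u y + 1) ^ pr
            = ∑ k ∈ (sF y).image (fun u => G.dist u y), psi a (k + 1) ^ pr :=
          (Finset.sum_image (f := fun k => psi a (k + 1) ^ pr) hinj).symm
        have hsubset : (sF y).image (fun u => G.dist u y) ⊆
            Finset.range (G.dist r y + 1) := by
          intro k hk
          obtain ⟨u, hu, rfl⟩ := Finset.mem_image.mp hk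
          have hu1 : u ∈ (geo hc r y).support := by simpa [hsF, List.mem_toFinset] using hu
          have := geo_split hc r y hu1
          simp only [Finset.mem_range]
          omega
        calc ∑ u ∈ sF y, psi a (G.dist u y + 1) ^ pr
            = ∑ k ∈ (sF y).image (fun u => G.dist u y), psi a (k + 1) ^ pr := himage
          _ ≤ ∑ k ∈ Finset.range (G.dist r y + 1), psi a (k + 1) ^ pr :=
              Finset.sum_le_sum_of_subset_of_nonneg hsubset
                (fun k _ _ => Real.rpow_nonneg (psi_pos a _).le pr)
          _ ≤ S := Summable.sum_le_tsum _ (fun k _ => Real.rpow_nonneg (psi_pos a _).le pr) hsummable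
      linarith
    rw [hdistF x y, hA]
    apply Real.rpow_le_rpow (Finset.sum_nonneg (fun u _ =>
      Real.rpow_nonneg (abs_nonneg _) pr)) hsum (by positivity)
  have hadj : ∀ x y : V, G.Adj x y → dist (f x) (f y) ≤ A := by
    intro x y hxy
    rcases adj_level htree r hxy with hl | hl
    · exact hadj1 x y hxy hl
    · rw [_root_.dist_comm]
      exact hadj1 y x hxy.symm hl
  -- Lipschitz along walks
  have hwalk : ∀ (x y : V) (w : G.Walk x y), dist (f x) (f y) ≤ A * w.length := by
    intro x y w
    induction w with
    | nil => simp
    | @cons u u' v h w' ih =>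
      calc dist (f u) (f v) ≤ dist (f u) (f u') + dist (f u') (f v) := dist_triangle _ _ _
        _ ≤ A + A * w'.length := add_le_add (hadj u u' h) ih
        _ = A * (Walk.cons h w').length := by
            rw [Walk.length_cons]
            push_cast
            ring
  have hupper : ∀ x y : V, dist (f x) (f y) ≤ A * (G.dist x y : ℝ) := by
    intro x y
    have := hwalk x y (geo hc x y)
    rwa [geo_length hc x y] at this
  -- lower bound
  have hlowerhalf : ∀ x y : V, ∀ m : V, m ∈ (geo hc r x).support →
      (∀ u, u ∈ (geo hc r x).support → u ∈ (geo hc r y).support →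
        G.dist r u ≤ G.dist r m) →
      ∑ k ∈ Finset.range (G.dist r x - G.dist r m), phi a k ^ pr
        ≤ ∑ u ∈ sF x ∪ sF y, |cf x u - cf y u| ^ pr := by
    intro x y m hmx hmax
    set nx := G.dist r x with hnx
    set nm := G.dist r m with hnm
    have hmle : nm + G.dist m x = nx := geo_split hc r x hmx
    set sx := nx - nm with hsx
    -- choice of vertices along the geodesic
    have hex : ∀ k, k < sx → ∃ u ∈ (geo hc r x).support, G.dist r u = nm + 1 + k := by
      intro k hk
      apply exists_mem_dist hc (geo hc r x) (geo_length hc r x)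
      rw [geo_length hc r x]
      omega
    set uch : ℕ → V := fun k => if h : k < sx then (hex k h).choose else r with huch
    have huch_spec : ∀ k, k < sx →
        uch k ∈ (geo hc r x).support ∧ G.dist r (uch k) = nm + 1 + k := by
      intro k hk
      rw [huch]
      simp only [dif_pos hk]
      exact ⟨(hex k hk).choose_spec.1, (hex k hk).choose_spec.2⟩
    have huch_inj : ∀ k ∈ Finset.range sx, ∀ k' ∈ Finset.range sx,
        uch k = uch k' → k = k' := by
      intro k hk k' hk' heq
      have h1 := (huch_spec k (Finset.mem_range.mp hk)).2
      have h2 := (huch_spec k' (Finset.mem_range.mp hk')).2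
      rw [heq] at h1
      omega
    have himsub : (Finset.range sx).image uch ⊆ sF x ∪ sF y := by
      intro u hu
      obtain ⟨k, hk, rfl⟩ := Finset.mem_image.mp hu
      apply Finset.mem_union_left
      simpa [hsF, List.mem_toFinset] using (huch_spec k (Finset.mem_range.mp hk)).1
    have hterm : ∀ k ∈ Finset.range sx,
        |cf x (uch k) - cf y (uch k)| ^ pr = phi a (sx - 1 - k) ^ pr := by
      intro k hk
      have hk' := Finset.mem_range.mp hk
      obtain ⟨humem, hudist⟩ := huch_spec k hk'
      have huny : uch k ∉ (geo hc r y).support := by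
        intro hmem
        have := hmax (uch k) humem hmem
        omega
      have hcy : cf y (uch k) = 0 := by rw [hcf]; exact if_neg huny
      have hsplit := geo_split hc r x humem
      have hdx : G.dist (uch k) x = sx - 1 - k := by omega
      have hcx : cf x (uch k) = phi a (sx - 1 - k) := by
        rw [hcf]; simp only [humem, if_true, hdx]
      rw [hcx, hcy, sub_zero, abs_of_pos (phi_pos a _)]
    calc ∑ k ∈ Finset.range sx, phi a k ^ pr
        = ∑ k ∈ Finset.range sx, phi a (sx - 1 - k) ^ pr :=
          (Finset.sum_range_reflect (fun k => phi a k ^ pr) sx).symm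
      _ = ∑ k ∈ Finset.range sx, |cf x (uch k) - cf y (uch k)| ^ pr :=
          (Finset.sum_congr rfl hterm).symm
      _ = ∑ u ∈ (Finset.range sx).image uch, |cf x u - cf y u| ^ pr :=
          (Finset.sum_image (f := fun u => |cf x u - cf y u| ^ pr) huch_inj).symm
      _ ≤ ∑ u ∈ sF x ∪ sF y, |cf x u - cf y u| ^ pr :=
          Finset.sum_le_sum_of_subset_of_nonneg himsub
            (fun u _ _ => Real.rpow_nonneg (abs_nonneg _) pr)
  have hlower : ∀ x y : V,
      ((G.dist x y : ℝ) / 4) ^ (a + 1 / pr) ≤ dist (f x) (f y) := by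
    intro x y
    obtain ⟨m, hmx, hmy, hmax, hmrx, hmry, hdd⟩ := meet hc r x y
    set d := G.dist x y with hd
    rcases Nat.eq_zero_or_pos d with hd0 | hd0
    · rw [hd0]
      simp only [Nat.cast_zero, zero_div]
      rw [Real.zero_rpow (by positivity)]
      exact dist_nonneg
    · set sx := G.dist r x - G.dist r m with hsx
      set sy := G.dist r y - G.dist r m with hsy
      set M := max sx sy with hM
      have hM0 : 0 < M := by
        rw [hM]
        omega
      have hMd : (d : ℝ) ≤ 2 * M := by
        have : d ≤ 2 * M := by omega
        exact_mod_cast this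
      have hsumM : ∑ k ∈ Finset.range M, phi a k ^ pr
          ≤ ∑ u ∈ sF x ∪ sF y, |cf x u - cf y u| ^ pr := by
        rcases max_cases sx sy with ⟨hMeq, _⟩ | ⟨hMeq, _⟩
        · rw [hM, hMeq]
          exact hlowerhalf x y m hmx hmax
        · rw [hM, hMeq]
          have := hlowerhalf y x m hmy (fun u h1 h2 => hmax u h2 h1)
          calc ∑ k ∈ Finset.range sy, phi a k ^ pr
              ≤ ∑ u ∈ sF y ∪ sF x, |cf y u - cf x u| ^ pr := this
            _ = ∑ u ∈ sF x ∪ sF y, |cf x u - cf y u| ^ pr := by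
                rw [Finset.union_comm]
                apply Finset.sum_congr rfl
                intro u _
                rw [abs_sub_comm]
      have hbig : ((d : ℝ) / 4) ^ (a * pr + 1)
          ≤ ∑ u ∈ sF x ∪ sF y, |cf x u - cf y u| ^ pr := by
        calc ((d : ℝ) / 4) ^ (a * pr + 1) ≤ ((M : ℝ) / 2) ^ (a * pr + 1) := by
              apply Real.rpow_le_rpow (by positivity) (by linarith) (by positivity)
          _ ≤ ∑ k ∈ Finset.range M, phi a k ^ pr := sum_phi_lb ha0 ha1.le hpr0 M hM0
          _ ≤ _ := hsumM
      rw [hdistF x y]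
      have h4 : (0:ℝ) ≤ (d : ℝ) / 4 := by positivity
      calc ((d : ℝ) / 4) ^ (a + 1 / pr)
          = (((d : ℝ) / 4) ^ (a * pr + 1)) ^ (1 / pr) := by
            rw [← Real.rpow_mul h4]
            congr 1
            field_simp
        _ ≤ (∑ u ∈ sF x ∪ sF y, |cf x u - cf y u| ^ pr) ^ (1 / pr) :=
            Real.rpow_le_rpow (Real.rpow_nonneg h4 _) hbig (by positivity)
  exact ⟨f, ⟨A, hA0, hupper⟩, hlower⟩

end Key

end TreeComp
end

/-- for a simplicial tree `T` (vertex set with the path metric) and any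
`1 < p < ∞`, the `L^p`-compression exponent of `T` equals `1`; in particular for every
`ε > 0` there is a large-scale Lipschitz map `f : T → L^p` with
`‖f x - f y‖ ≥ C * d(x,y)^(1-ε) - D`. -/
theorem tree_compressionExponent_eq_one
    {V : Type*} (G : SimpleGraph V) (htree : G.IsTree) [G.LocallyFinite]
    (mV : PseudoMetricSpace V)
    -- the metric on the tree is the simplicial path metric
    (hdist : ∀ u v : V, @dist V mV.toDist u v = (G.dist u v : ℝ))
    (p : ENNReal) [Fact (1 ≤ p)] (hp1 : 1 < p) (hptop : p ≠ ⊤) :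
    @compressionExponent V (Lp ℝ p (volume : Measure ℝ)) mV _ = 1 ∧
      ∀ ε : ℝ, 0 < ε →
        ∃ f : V → Lp ℝ p (volume : Measure ℝ),
          @LargeScaleLipschitz V _ mV _ f ∧
          ∃ C D : ℝ, 0 < C ∧ 0 ≤ D ∧
            ∀ x y : V, C * (@dist V mV.toDist x y) ^ ((1 : ℝ) - ε) - D ≤
              dist (f x) (f y) := by
  classical
  have main : ∀ ε : ℝ, 0 < ε → ∃ f : V → Lp ℝ p (volume : Measure ℝ),
      @LargeScaleLipschitz V _ mV _ f ∧
      ∀ x y : V, (1/4 : ℝ) * (@dist V mV.toDist x y) ^ ((1:ℝ) - ε) - (1/4 : ℝ)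
        ≤ dist (f x) (f y) := by
    intro ε hε
    rcases le_or_gt 1 ε with hε1 | hε1
    · -- trivial zero map
      refine ⟨fun _ => 0, ⟨0, 0, le_rfl, le_rfl, fun x y => by simp⟩, ?_⟩
      intro x y
      have hdxy := hdist x y
      have hpow : (@dist V mV.toDist x y) ^ ((1:ℝ) - ε) ≤ 1 := by
        rcases Nat.eq_zero_or_pos (G.dist x y) with h0 | h0
        · rw [hdxy, h0]
          simpa using Real.zero_rpow_le_one _
        · apply Real.rpow_le_one_of_one_le_of_nonpos
          · rw [hdxy]
            exact_mod_cast h0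
          · linarith
      have : dist ((fun _ => (0 : Lp ℝ p (volume : Measure ℝ))) x) 0 = 0 := by simp
      simp only [dist_self]
      nlinarith
    · -- actual embedding
      set pr := p.toReal with hprdef
      have hpr1 : 1 < pr := by
        have := (ENNReal.toReal_lt_toReal (by simp) hptop).mpr hp1
        simpa using this
      have hpr0 : 0 < pr := lt_trans one_pos hpr1
      have hinv : 0 < 1/pr := by positivity
      have hinv1 : 1/pr < 1 := by
        rw [div_lt_one hpr0]; exact hpr1
      set δ : ℝ := min (ε/2) ((1 - 1/pr)/2) with hδ
      have hδ0 : 0 < δ := lt_min (by linarith) (by linarith)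
      have hδε : δ < ε := lt_of_le_of_lt (min_le_left _ _) (by linarith)
      have hδpr : δ ≤ (1 - 1/pr)/2 := min_le_right _ _
      set a : ℝ := 1 - 1/pr - δ with ha
      have ha0 : 0 < a := by
        rw [ha]; linarith
      have ha1 : a < 1 := by rw [ha]; linarith
      have hq : 1 < (1 - a) * pr := by
        rw [ha]
        have : (1 - (1 - 1/pr - δ)) * pr = 1 + δ * pr := by
          field_simp
          ring
        rw [this]
        nlinarith
      obtain ⟨f, ⟨A, hA0, hupper⟩, hlower⟩ :=
        TreeComp.key (V := V) htree p hp1 hptop a ha0 ha1 hq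
      refine ⟨f, ⟨A, 0, hA0, le_rfl, fun x y => by
        rw [hdist x y, add_zero]; exact hupper x y⟩, ?_⟩
      intro x y
      have hkey := hlower x y
      set d : ℝ := (G.dist x y : ℝ) with hd
      have hd0 : 0 ≤ d := by rw [hd]; positivity
      have hβ : a + 1/pr = 1 - δ := by rw [ha]; ring
      have hβ1 : a + 1/pr ≤ 1 := by rw [hβ]; linarith
      have hβε : 1 - ε ≤ a + 1/pr := by rw [hβ]; linarith
      have hβ0 : 0 < a + 1/pr := by positivity
      have hsplit : (d/4) ^ (a + 1/pr) = d ^ (a + 1/pr) * (4:ℝ)⁻¹ ^ (a + 1/pr) := by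
        rw [div_eq_mul_inv, Real.mul_rpow hd0 (by norm_num)]
      have hquarter : (4:ℝ)⁻¹ ≤ (4:ℝ)⁻¹ ^ (a + 1/pr) := by
        have := Real.rpow_le_rpow_of_exponent_ge (x := (4:ℝ)⁻¹) (by norm_num) (by norm_num) hβ1
        simpa using this
      rw [hdist x y, ← hd]
      have hdpow : d ^ ((1:ℝ) - ε) ≤ d ^ (a + 1/pr) ∨ (G.dist x y) = 0 := by
        rcases Nat.eq_zero_or_pos (G.dist x y) with h0 | h0
        · exact Or.inr h0
        · left
          apply Real.rpow_le_rpow_of_exponent_le _ hβε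
          rw [hd]
          exact_mod_cast h0
      rcases hdpow with hdpow | h0
      · have h1 : (1/4 : ℝ) * d ^ (a + 1/pr) ≤ (d/4) ^ (a + 1/pr) := by
          rw [hsplit]
          have hdp : 0 ≤ d ^ (a + 1/pr) := Real.rpow_nonneg hd0 _
          nlinarith
        have h2 : (1/4 : ℝ) * d ^ ((1:ℝ) - ε) ≤ (1/4 : ℝ) * d ^ (a + 1/pr) := by
          nlinarith
        have h3 := le_trans (le_trans h2 h1) hkey
        linarith
      · have hdz : d = 0 := by rw [hd, h0]; simp
        rw [hdz, Real.zero_rpow (by linarith : (1:ℝ) - ε ≠ 0)]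
        have := dist_nonneg (x := f x) (y := f y)
        linarith
  constructor
  · -- the compression exponent equals 1
    rw [compressionExponent]
    have hmem : ∀ ε : ℝ, 0 < ε → ε ≤ 1 → (1 - ε) ∈
        {α : ℝ | α ∈ Set.Icc (0 : ℝ) 1 ∧ ∃ f : V → Lp ℝ p (volume : Measure ℝ),
          LargeScaleLipschitz f ∧ ∃ C D : ℝ, 0 < C ∧ 0 ≤ D ∧
          ∀ x y : V, C * dist x y ^ (1 - ε) - D ≤ dist (f x) (f y)} := by
      intro ε hε hε1
      obtain ⟨f, hlsl, hb⟩ := main ε hε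
      exact ⟨⟨by linarith, by linarith⟩, f, hlsl, 1/4, 1/4, by norm_num, by norm_num, hb⟩
    have hbdd : BddAbove {α : ℝ | α ∈ Set.Icc (0 : ℝ) 1 ∧
        ∃ f : V → Lp ℝ p (volume : Measure ℝ), LargeScaleLipschitz f ∧
        ∃ C D : ℝ, 0 < C ∧ 0 ≤ D ∧
        ∀ x y : V, C * dist x y ^ α - D ≤ dist (f x) (f y)} :=
      ⟨1, fun α hα => hα.1.2⟩
    apply le_antisymm
    · apply csSup_le
      · exact ⟨1 - 1, by simpa using hmem 1 one_pos le_rfl⟩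
      · exact fun α hα => hα.1.2
    · apply le_of_forall_lt
      intro c hc
      set ε : ℝ := min ((1 - c)/2) 1 with hε
      have hε0 : 0 < ε := lt_min (by linarith) one_pos
      have hε1 : ε ≤ 1 := min_le_right _ _
      have hcα : c < 1 - ε := by
        have : ε ≤ (1 - c)/2 := min_le_left _ _
        linarith
      exact lt_of_lt_of_le hcα (le_csSup hbdd (hmem ε hε0 hε1))
  · intro ε hε
    obtain ⟨f, hlsl, hb⟩ := main ε hε
    exact ⟨f, hlsl, 1/4, 1/4, by norm_num, by norm_num, hb⟩
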